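/- arXiv:2312.08061 — 3 statements merged into one kernel-verified Lean document; each statement's English description precedes it below -/
import Mathlib

section
/- Every normal subgroup of the finitary symmetric group S_ℕ is either trivial, equal to the finitary alternating group A_ℕ, or equal to S_ℕ itself. -/
/-- The support of a permutation of `ℕ`. -/
def fsupp (σ : Equiv.Perm ℕ) : Set ℕ := {x | σ x ≠ x}

lemma fsupp_one : fsupp (1 : Equiv.Perm ℕ) = ∅ := by
  ext x; simp [fsupp]

lemma fsupp_mul_subset (a b : Equiv.Perm ℕ) : fsupp (a * b) ⊆ fsupp a ∪ fsupp b := by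
  intro x hx
  by_contra hmem
  simp only [Set.mem_union, fsupp, Set.mem_setOf_eq, not_or, not_not] at hmem
  exact hx (show a (b x) = x by rw [hmem.2, hmem.1])

lemma fsupp_inv (a : Equiv.Perm ℕ) : fsupp a⁻¹ = fsupp a := by
  ext x
  simp only [fsupp, Set.mem_setOf_eq, ne_eq, Equiv.Perm.inv_eq_iff_eq]
  exact not_congr eq_comm

/-- `S_ℕ`, the group of finitely supported permutations of `ℕ`. -/
def SN : Subgroup (Equiv.Perm ℕ) where
  carrier := {σ | (fsupp σ).Finite}
  one_mem' := by
    show (fsupp (1 : Equiv.Perm ℕ)).Finite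
    rw [fsupp_one]; exact Set.finite_empty
  mul_mem' := by
    intro a b ha hb
    exact Set.Finite.subset (Set.Finite.union ha hb) (fsupp_mul_subset a b)
  inv_mem' := by
    intro a ha
    show (fsupp a⁻¹).Finite
    rw [fsupp_inv]; exact ha

/-- `IsSwap σ` means `σ` is a transposition. -/
def IsSwap (σ : Equiv.Perm ℕ) : Prop := ∃ i j, i ≠ j ∧ σ = Equiv.swap i j

/-- `A_ℕ`, the finitary alternating group: finite products of an even number of
transpositions. -/
def AN : Subgroup (Equiv.Perm ℕ) where
  carrier := {σ | ∃ l : List (Equiv.Perm ℕ), (∀ τ ∈ l, IsSwap τ) ∧ Even l.length ∧ σ = l.prod}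
  one_mem' := ⟨[], by simp, by simp, by simp⟩
  mul_mem' := by
    rintro a b ⟨l, hl, hle, rfl⟩ ⟨m, hm, hme, rfl⟩
    refine ⟨l ++ m, ?_, by simpa using hle.add hme, (List.prod_append).symm⟩
    intro τ hτ
    rcases List.mem_append.mp hτ with h | h
    exacts [hl τ h, hm τ h]
  inv_mem' := by
    rintro a ⟨l, hl, hle, rfl⟩
    refine ⟨(l.map fun x => x⁻¹).reverse, ?_, by simpa using hle, ?_⟩
    · intro τ hτ
      simp only [List.mem_reverse, List.mem_map] at hτ
      obtain ⟨σ, hσ, rfl⟩ := hτ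
      obtain ⟨i, j, hij, rfl⟩ := hl σ hσ
      exact ⟨i, j, hij, by simp⟩
    · rw [List.prod_inv_reverse]

/-- The group of finitely supported permutations of `ℕ` supported inside `A`. -/
def SOn (A : Set ℕ) : Subgroup (Equiv.Perm ℕ) where
  carrier := {σ | (fsupp σ).Finite ∧ fsupp σ ⊆ A}
  one_mem' := by
    constructor <;> rw [fsupp_one]
    exacts [Set.finite_empty, Set.empty_subset A]
  mul_mem' := by
    intro a b ha hb
    exact ⟨Set.Finite.subset (Set.Finite.union ha.1 hb.1) (fsupp_mul_subset a b),
      (fsupp_mul_subset a b).trans (Set.union_subset ha.2 hb.2)⟩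
  inv_mem' := by
    intro a ha
    constructor <;> rw [fsupp_inv]
    exacts [ha.1, ha.2]

lemma swap_mem_SN (i j : ℕ) : Equiv.swap i j ∈ SN := by
  have : fsupp (Equiv.swap i j) ⊆ {i, j} := by
    intro x hx
    by_contra hmem
    simp only [Set.mem_insert_iff, Set.mem_singleton_iff, not_or] at hmem
    exact hx (Equiv.swap_apply_of_ne_of_ne hmem.1 hmem.2)
  exact Set.Finite.subset (Set.toFinite _) this

/-- The 3-cycle `(a b c)` sending `a ↦ b ↦ c ↦ a`. -/
def cycle3 (a b c : ℕ) : Equiv.Perm ℕ := Equiv.swap a c * Equiv.swap a b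

lemma cycle3_mem_SN (a b c : ℕ) : cycle3 a b c ∈ SN :=
  mul_mem (swap_mem_SN a c) (swap_mem_SN a b)


lemma conj_swap (g : Equiv.Perm ℕ) (a b : ℕ) :
    g * Equiv.swap a b * g⁻¹ = Equiv.swap (g a) (g b) :=
  (Equiv.swap_apply_apply g a b).symm

lemma conj_cycle3 (g : Equiv.Perm ℕ) (a b c : ℕ) :
    g * cycle3 a b c * g⁻¹ = cycle3 (g a) (g b) (g c) := by
  simp only [cycle3, Equiv.swap_apply_apply]
  group

lemma cycle3_apply_fst {a b c : ℕ} (hab : a ≠ b) (hbc : b ≠ c) :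
    cycle3 a b c a = b := by
  simp only [cycle3, Equiv.Perm.mul_apply, Equiv.swap_apply_left]
  exact Equiv.swap_apply_of_ne_of_ne (Ne.symm hab) hbc

lemma cycle3_apply_snd (a b c : ℕ) :
    cycle3 a b c b = c := by
  simp [cycle3, Equiv.Perm.mul_apply, Equiv.swap_apply_right, Equiv.swap_apply_left]

lemma cycle3_apply_of_ne {a b c x : ℕ} (hxa : x ≠ a) (hxb : x ≠ b) (hxc : x ≠ c) :
    cycle3 a b c x = x := by
  simp only [cycle3, Equiv.Perm.mul_apply,
    Equiv.swap_apply_of_ne_of_ne hxa hxb, Equiv.swap_apply_of_ne_of_ne hxa hxc]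

/-- A finitary permutation mapping any given triple of distinct points to any other. -/
lemma exists_extend {a b c a' b' c' : ℕ} (h1 : a ≠ b) (h2 : a ≠ c) (h3 : b ≠ c)
    (h1' : a' ≠ b') (h2' : a' ≠ c') (h3' : b' ≠ c') :
    ∃ g ∈ SN, g a = a' ∧ g b = b' ∧ g c = c' := by
  set S : ℕ := a + b + c + a' + b' + c' with hS
  set p : ℕ := S + 1
  set q : ℕ := S + 2
  set r : ℕ := S + 3
  have key : ∀ x y z : ℕ, x ≠ y → x ≠ z → y ≠ z → x ≤ S → y ≤ S → z ≤ S →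
      ((Equiv.swap x p * Equiv.swap y q * Equiv.swap z r) x = p ∧
       (Equiv.swap x p * Equiv.swap y q * Equiv.swap z r) y = q ∧
       (Equiv.swap x p * Equiv.swap y q * Equiv.swap z r) z = r) := by
    intro x y z hxy hxz hyz hx hy hz
    refine ⟨?_, ?_, ?_⟩
    · rw [Equiv.Perm.mul_apply, Equiv.Perm.mul_apply,
        Equiv.swap_apply_of_ne_of_ne hxz (show x ≠ r by omega),
        Equiv.swap_apply_of_ne_of_ne hxy (show x ≠ q by omega), Equiv.swap_apply_left]
    · rw [Equiv.Perm.mul_apply, Equiv.Perm.mul_apply,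
        Equiv.swap_apply_of_ne_of_ne hyz (show y ≠ r by omega), Equiv.swap_apply_left,
        Equiv.swap_apply_of_ne_of_ne (show q ≠ x by omega) (show q ≠ p by omega)]
    · rw [Equiv.Perm.mul_apply, Equiv.Perm.mul_apply, Equiv.swap_apply_left,
        Equiv.swap_apply_of_ne_of_ne (show r ≠ y by omega) (show r ≠ q by omega),
        Equiv.swap_apply_of_ne_of_ne (show r ≠ x by omega) (show r ≠ p by omega)]
  obtain ⟨ha1, hb1, hc1⟩ := key a b c h1 h2 h3 (by omega) (by omega) (by omega)
  obtain ⟨ha2, hb2, hc2⟩ := key a' b' c' h1' h2' h3' (by omega) (by omega) (by omega)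
  set g1 := Equiv.swap a p * Equiv.swap b q * Equiv.swap c r with hg1
  set g2 := Equiv.swap a' p * Equiv.swap b' q * Equiv.swap c' r with hg2
  have hg1S : g1 ∈ SN := mul_mem (mul_mem (swap_mem_SN _ _) (swap_mem_SN _ _)) (swap_mem_SN _ _)
  have hg2S : g2 ∈ SN := mul_mem (mul_mem (swap_mem_SN _ _) (swap_mem_SN _ _)) (swap_mem_SN _ _)
  refine ⟨g2⁻¹ * g1, mul_mem (inv_mem hg2S) hg1S, ?_, ?_, ?_⟩
  · rw [Equiv.Perm.mul_apply, ha1, ← ha2, Equiv.Perm.inv_eq_iff_eq]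
  · rw [Equiv.Perm.mul_apply, hb1, ← hb2, Equiv.Perm.inv_eq_iff_eq]
  · rw [Equiv.Perm.mul_apply, hc1, ← hc2, Equiv.Perm.inv_eq_iff_eq]

/-- Every element of `S_ℕ` is a product of transpositions. -/
lemma exists_swap_list (σ : Equiv.Perm ℕ) (hσ : σ ∈ SN) :
    ∃ l : List (Equiv.Perm ℕ), (∀ τ ∈ l, IsSwap τ) ∧ σ = l.prod := by
  have hfin : (fsupp σ).Finite := hσ
  generalize hn : hfin.toFinset.card = n
  induction n using Nat.strong_induction_on generalizing σ with
  | _ n ih =>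
    by_cases h1 : σ = 1
    · exact ⟨[], by simp, by simp [h1]⟩
    · have : ∃ a, σ a ≠ a := by
        by_contra h
        push_neg at h
        exact h1 (Equiv.ext fun x => by simpa using h x)
      obtain ⟨a, ha⟩ := this
      set b := σ a with hb
      have hab : a ≠ b := fun h => ha h.symm
      set σ' := Equiv.swap a b * σ with hσ'
      have hσ'S : σ' ∈ SN := mul_mem (swap_mem_SN a b) hσ
      have hfin' : (fsupp σ').Finite := hσ'S
      have hsub : fsupp σ' ⊆ fsupp σ \ {a} := by
        intro x hx
        have hx' : Equiv.swap a b (σ x) ≠ x := hx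
        constructor
        · intro hxf
          by_cases hxa : x = a
          · rw [hxa] at hxf; exact ha (hb.trans hxf)
          · by_cases hxb : x = b
            · rw [hxb] at hxf; exact hab (σ.injective (hxf.trans hb)).symm
            · exact hx' (by rw [hxf]; exact Equiv.swap_apply_of_ne_of_ne hxa hxb)
        · intro hxa
          simp only [Set.mem_singleton_iff] at hxa
          exact hx' (by rw [hxa, ← hb, Equiv.swap_apply_right])
      have hcard : hfin'.toFinset.card < n := by
        rw [← hn]
        apply Finset.card_lt_card
        rw [Finset.ssubset_iff_of_subset]
        · refine ⟨a, ?_, ?_⟩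
          · simpa [fsupp] using ha
          · intro h
            have := hsub (hfin'.mem_toFinset.mp h)
            simp at this
        · intro x hx
          rw [Set.Finite.mem_toFinset] at hx ⊢
          exact (hsub hx).1
      obtain ⟨l, hl, hlp⟩ := ih _ hcard σ' hσ'S hfin' rfl
      refine ⟨Equiv.swap a b :: l, ?_, ?_⟩
      · intro τ hτ
        rcases List.mem_cons.mp hτ with rfl | hτ
        exacts [⟨a, b, hab, rfl⟩, hl τ hτ]
      · have : σ = Equiv.swap a b * σ' := by
          rw [hσ', ← mul_assoc, Equiv.swap_mul_self, one_mul]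
        rw [this, List.prod_cons, hlp]

/-- Every normal subgroup of the finitary symmetric group `S_ℕ` is trivial,
the finitary alternating group `A_ℕ`, or all of `S_ℕ`. -/
theorem normal_subgroups_of_SN (N : Subgroup (Equiv.Perm ℕ)) (hNS : N ≤ SN)
    (hnormal : ∀ g ∈ SN, ∀ x ∈ N, g * x * g⁻¹ ∈ N) :
    N = ⊥ ∨ N = AN ∨ N = SN := by
  by_cases hbot : N = ⊥
  · exact Or.inl hbot
  right
  -- Step 1: N contains a 3-cycle.
  have hc3 : ∃ a b c : ℕ, a ≠ b ∧ a ≠ c ∧ b ≠ c ∧ cycle3 a b c ∈ N := by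
    obtain ⟨σ, hσN, hσ1⟩ : ∃ σ ∈ N, σ ≠ 1 := by
      by_contra h
      push_neg at h
      exact hbot ((Subgroup.eq_bot_iff_forall N).mpr h)
    have : ∃ a, σ a ≠ a := by
      by_contra h; push_neg at h
      exact hσ1 (Equiv.ext fun x => by simpa using h x)
    obtain ⟨a, ha⟩ := this
    set b := σ a with hb
    have hab : a ≠ b := fun h => ha h.symm
    set c := a + b + σ b + 1 with hc
    have hca : c ≠ a := by omega
    have hcb : c ≠ b := by omega
    have hπN : σ * (Equiv.swap a c * σ⁻¹ * Equiv.swap a c) ∈ N := by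
      have h0 : Equiv.swap a c * σ⁻¹ * (Equiv.swap a c)⁻¹ ∈ N :=
        hnormal _ (swap_mem_SN a c) _ (inv_mem hσN)
      rw [Equiv.swap_inv] at h0
      exact mul_mem hσN h0
    have hπ : σ * (Equiv.swap a c * σ⁻¹ * Equiv.swap a c)
        = Equiv.swap b (σ c) * Equiv.swap a c := by
      have h2 : σ * Equiv.swap a c * σ⁻¹ = Equiv.swap (σ a) (σ c) := conj_swap σ a c
      rw [← hb] at h2
      calc σ * (Equiv.swap a c * σ⁻¹ * Equiv.swap a c)
          = (σ * Equiv.swap a c * σ⁻¹) * Equiv.swap a c := by group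
        _ = Equiv.swap b (σ c) * Equiv.swap a c := by rw [h2]
    rw [hπ] at hπN
    by_cases h1 : σ c = c
    · rw [h1] at hπN
      have heq : cycle3 c a b = Equiv.swap b c * Equiv.swap a c := by
        rw [cycle3, Equiv.swap_comm c b, Equiv.swap_comm c a]
      exact ⟨c, a, b, hca, hcb, hab, heq ▸ hπN⟩
    · by_cases h2 : σ c = a
      · rw [h2, Equiv.swap_comm b a] at hπN
        have heq : cycle3 a c b = Equiv.swap a b * Equiv.swap a c := rfl
        exact ⟨a, c, b, Ne.symm hca, hab, hcb, heq ▸ hπN⟩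
      · set d := σ c with hd
        have hdb : d ≠ b := fun h => hca (σ.injective (h.trans hb))
        set e := a + b + c + d + 1 with he
        have hea : e ≠ a := by omega
        have heb : e ≠ b := by omega
        have hec : e ≠ c := by omega
        have hed : e ≠ d := by omega
        set γ := cycle3 a c e with hγ
        have hγa : γ a = c := cycle3_apply_fst (Ne.symm hca) (Ne.symm hec)
        have hγc : γ c = e := cycle3_apply_snd a c e
        have hγb : γ b = b := cycle3_apply_of_ne (Ne.symm hab) (Ne.symm hcb) (Ne.symm heb)
        have hγd : γ d = d := cycle3_apply_of_ne h2 h1 (Ne.symm hed)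
        have hπ'N : γ * (Equiv.swap b d * Equiv.swap a c) * γ⁻¹ ∈ N :=
          hnormal _ (cycle3_mem_SN a c e) _ hπN
        have hπ' : γ * (Equiv.swap b d * Equiv.swap a c) * γ⁻¹
            = Equiv.swap b d * Equiv.swap c e := by
          have h3 : γ * (Equiv.swap b d * Equiv.swap a c) * γ⁻¹
              = (γ * Equiv.swap b d * γ⁻¹) * (γ * Equiv.swap a c * γ⁻¹) := by group
          rw [h3, conj_swap, conj_swap, hγa, hγb, hγc, hγd]
        rw [hπ'] at hπ'N
        have hcomm : Equiv.swap b d * Equiv.swap c e = Equiv.swap c e * Equiv.swap b d := by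
          have h4 := conj_swap (Equiv.swap b d) c e
          rw [Equiv.swap_inv,
            Equiv.swap_apply_of_ne_of_ne hcb (fun h => h1 h.symm),
            Equiv.swap_apply_of_ne_of_ne heb hed] at h4
          nth_rewrite 2 [← h4]
          rw [mul_assoc, mul_assoc, Equiv.swap_mul_self, mul_one]
        have hfinal : (Equiv.swap b d * Equiv.swap c e) * (Equiv.swap b d * Equiv.swap a c)
            = cycle3 c a e := by
          rw [hcomm, mul_assoc, ← mul_assoc (Equiv.swap b d), Equiv.swap_mul_self, one_mul,
            Equiv.swap_comm a c]
          rfl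
        exact ⟨c, a, e, hca, Ne.symm hec, Ne.symm hea, hfinal ▸ mul_mem hπ'N hπN⟩
  -- Step 2: N contains all 3-cycles.
  have hall : ∀ a b c : ℕ, a ≠ b → a ≠ c → b ≠ c → cycle3 a b c ∈ N := by
    obtain ⟨x, y, z, hxy, hxz, hyz, hmem⟩ := hc3
    intro a b c hab hac hbc
    obtain ⟨g, hgS, hga, hgb, hgc⟩ := exists_extend hxy hxz hyz hab hac hbc
    have h5 := hnormal g hgS _ hmem
    rwa [conj_cycle3, hga, hgb, hgc] at h5
  -- Step 3: products of two swaps lie in N.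
  have hpair : ∀ x y : Equiv.Perm ℕ, IsSwap x → IsSwap y → x * y ∈ N := by
    rintro x y ⟨a, b, hab, rfl⟩ ⟨c, d, hcd, rfl⟩
    by_cases hac : a = c
    · subst hac
      by_cases hbd : b = d
      · subst hbd; rw [Equiv.swap_mul_self]; exact one_mem N
      · have heq : Equiv.swap a b * Equiv.swap a d = cycle3 a d b := rfl
        rw [heq]; exact hall a d b hcd hab (Ne.symm hbd)
    · by_cases had : a = d
      · subst had
        by_cases hbc : b = c
        · subst hbc
          rw [Equiv.swap_comm b a, Equiv.swap_mul_self]; exact one_mem N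
        · rw [Equiv.swap_comm c a]
          have heq : Equiv.swap a b * Equiv.swap a c = cycle3 a c b := rfl
          rw [heq]; exact hall a c b hac hab (fun h => hbc h.symm)
      · by_cases hbc : b = c
        · subst hbc
          rw [Equiv.swap_comm a b]
          have heq : Equiv.swap b a * Equiv.swap b d = cycle3 b d a := rfl
          rw [heq]; exact hall b d a hcd (Ne.symm hab) (fun h => had h.symm)
        · by_cases hbd : b = d
          · subst hbd
            rw [Equiv.swap_comm a b, Equiv.swap_comm c b]
            have heq : Equiv.swap b a * Equiv.swap b c = cycle3 b c a := rfl
            rw [heq]; exact hall b c a hbc (Ne.symm hab) (Ne.symm hac)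
          · have hstep : Equiv.swap a b * Equiv.swap c d
                = (Equiv.swap b a * Equiv.swap b c) * (Equiv.swap c b * Equiv.swap c d) := by
              rw [Equiv.swap_comm b a, Equiv.swap_comm c b,
                mul_assoc, ← mul_assoc (Equiv.swap b c), Equiv.swap_mul_self, one_mul]
            rw [hstep]
            have h1 : Equiv.swap b a * Equiv.swap b c = cycle3 b c a := rfl
            have h2 : Equiv.swap c b * Equiv.swap c d = cycle3 c d b := rfl
            rw [h1, h2]
            exact mul_mem (hall b c a hbc (Ne.symm hab) (Ne.symm hac))
              (hall c d b hcd (fun h => hbc h.symm) (fun h => hbd h.symm))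
  -- Step 4: AN ≤ N.
  have hAN : AN ≤ N := by
    have key : ∀ n (l : List (Equiv.Perm ℕ)), l.length = n → (∀ τ ∈ l, IsSwap τ) →
        Even n → l.prod ∈ N := by
      intro n
      induction n using Nat.strong_induction_on with
      | _ n ih =>
        intro l hlen hsw hev
        match l, hlen with
        | [], hlen =>
          simpa using one_mem N
        | [x], hlen =>
          rw [← hlen] at hev
          simp [Nat.even_iff] at hev
        | x :: y :: t, hlen =>
          simp only [List.length_cons] at hlen
          have ht : t.prod ∈ N := by
            refine ih t.length (by omega) t rfl (fun τ hτ => hsw τ (by simp [hτ])) ?_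
            rw [Nat.even_iff] at hev ⊢
            omega
          rw [List.prod_cons, List.prod_cons, ← mul_assoc]
          exact mul_mem (hpair x y (hsw x (by simp)) (hsw y (by simp))) ht
    rintro σ ⟨l, hl, hle, rfl⟩
    exact key l.length l rfl hl hle
  -- Step 5: conclude.
  by_cases hNA : N ≤ AN
  · exact Or.inl (le_antisymm hNA hAN)
  · refine Or.inr (le_antisymm hNS ?_)
    rw [SetLike.not_le_iff_exists] at hNA
    obtain ⟨σ, hσN, hσA⟩ := hNA
    obtain ⟨m, hm, hmp⟩ := exists_swap_list σ (hNS hσN)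
    have hmodd : ¬ Even m.length := fun h => hσA ⟨m, hm, h, hmp⟩
    intro τ hτS
    obtain ⟨l, hl, hlp⟩ := exists_swap_list τ hτS
    by_cases hle : Even l.length
    · exact hAN ⟨l, hl, hle, hlp⟩
    · have hmem : τ * σ⁻¹ ∈ AN := by
        refine ⟨l ++ (m.map fun x => x⁻¹).reverse, ?_, ?_, ?_⟩
        · intro τ' hτ'
          rcases List.mem_append.mp hτ' with h | h
          · exact hl τ' h
          · simp only [List.mem_reverse, List.mem_map] at h
            obtain ⟨π, hπ, rfl⟩ := h
            obtain ⟨i, j, hij, rfl⟩ := hm π hπ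
            exact ⟨i, j, hij, by simp⟩
        · simp only [List.length_append, List.length_reverse, List.length_map]
          rw [Nat.even_iff] at hle hmodd ⊢
          omega
        · rw [List.prod_append, ← hlp, ← List.prod_inv_reverse, ← hmp]
      have := mul_mem (hAN hmem) hσN
      rwa [mul_assoc, inv_mul_cancel, mul_one] at this
end

section
/- If N is a normal subgroup of S_ℕ containing the symmetric group S_{[n₀]} on {1,…,n₀} for some n₀ ≥ 5, then N = S_ℕ. -/
/-- If a normal subgroup `N` of `S_ℕ` contains `S_{[n₀]}` for some `n₀ ≥ 5`,
then `N = S_ℕ`. -/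
theorem normal_subgroup_containing_Sn0 (N : Subgroup (Equiv.Perm ℕ)) (hNS : N ≤ SN)
    (hnormal : ∀ g ∈ SN, ∀ x ∈ N, g * x * g⁻¹ ∈ N)
    (n₀ : ℕ) (hn₀ : 5 ≤ n₀) (hcontains : SOn (Set.Icc 1 n₀) ≤ N) :
    N = SN := by
  apply le_antisymm hNS
  -- Step 1: every transposition lies in N.
  have hswapN : ∀ i j : ℕ, Equiv.swap i j ∈ N := by
    intro i j
    rcases eq_or_ne i j with rfl | hij
    · rw [Equiv.swap_self]; exact N.one_mem
    · have h12 : Equiv.swap 1 2 ∈ N := by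
        apply hcontains
        refine ⟨swap_mem_SN 1 2, ?_⟩
        intro x hx
        by_contra hmem
        have h1 : x ≠ 1 := by rintro rfl; exact hmem ⟨le_refl 1, by omega⟩
        have h2 : x ≠ 2 := by rintro rfl; exact hmem ⟨by norm_num, by omega⟩
        exact hx (Equiv.swap_apply_of_ne_of_ne h1 h2)
      set g : Equiv.Perm ℕ := Equiv.swap ((Equiv.swap 1 i) 2) j * Equiv.swap 1 i with hg_def
      have hg : g ∈ SN := mul_mem (swap_mem_SN _ _) (swap_mem_SN _ _)
      have hne : i ≠ (Equiv.swap 1 i) 2 := by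
        have : (Equiv.swap 1 i) 1 = i := Equiv.swap_apply_left 1 i
        rw [← this]
        intro h
        exact (by norm_num : (1 : ℕ) ≠ 2) ((Equiv.swap 1 i).injective h)
      have h1 : g 1 = i := by
        rw [hg_def]
        simp only [Equiv.Perm.mul_apply, Equiv.swap_apply_left]
        exact Equiv.swap_apply_of_ne_of_ne hne hij
      have h2 : g 2 = j := by
        rw [hg_def]
        simp only [Equiv.Perm.mul_apply, Equiv.swap_apply_left]
      have hkey := hnormal g hg _ h12
      rwa [← Equiv.swap_apply_apply, h1, h2] at hkey
  -- Step 2: every finitely supported permutation is in N, by induction on support size.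
  have main : ∀ n : ℕ, ∀ σ : Equiv.Perm ℕ, ∀ h : (fsupp σ).Finite,
      h.toFinset.card ≤ n → σ ∈ N := by
    intro n
    induction n with
    | zero =>
      intro σ h hcard
      have hempty : fsupp σ = ∅ := by
        have := Finset.card_eq_zero.mp (Nat.le_zero.mp hcard)
        rwa [Set.Finite.toFinset_eq_empty] at this
      have : σ = 1 := by
        ext x
        by_contra hx
        exact absurd (show x ∈ fsupp σ from hx) (by rw [hempty]; exact Set.notMem_empty x)
      rw [this]; exact N.one_mem
    | succ n ih =>
      intro σ h hcard
      by_cases hσ1 : σ = 1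
      · rw [hσ1]; exact N.one_mem
      · have : ∃ x, σ x ≠ x := by
          by_contra hall
          push_neg at hall
          exact hσ1 (Equiv.ext hall)
        obtain ⟨x, hx⟩ := this
        set τ : Equiv.Perm ℕ := Equiv.swap x (σ x) * σ with hτ_def
        have hsub : fsupp τ ⊆ fsupp σ \ {x} := by
          intro y hy
          constructor
          · by_contra hyσ
            have hyy : σ y = y := not_not.mp hyσ
            have hyx : y ≠ x := by rintro rfl; exact hx hyy
            have hysx : y ≠ σ x := by
              rintro rfl
              exact hx (σ.injective hyy)
            exact hy (by
              show (Equiv.swap x (σ x) * σ) y = y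
              rw [Equiv.Perm.mul_apply, hyy, Equiv.swap_apply_of_ne_of_ne hyx hysx])
          · simp only [Set.mem_singleton_iff]
            rintro rfl
            exact hy (by
              show (Equiv.swap y (σ y) * σ) y = y
              rw [Equiv.Perm.mul_apply, Equiv.swap_apply_right])
        have hτfin : (fsupp τ).Finite := h.subset (hsub.trans (Set.diff_subset))
        have hτcard : hτfin.toFinset.card ≤ n := by
          have hsub' : hτfin.toFinset ⊆ h.toFinset.erase x := by
            intro y hy
            rw [Set.Finite.mem_toFinset] at hy
            have := hsub hy
            rw [Finset.mem_erase, Set.Finite.mem_toFinset]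
            exact ⟨by simpa using this.2, this.1⟩
          have hxmem : x ∈ h.toFinset := by rw [Set.Finite.mem_toFinset]; exact hx
          calc hτfin.toFinset.card ≤ (h.toFinset.erase x).card := Finset.card_le_card hsub'
            _ = h.toFinset.card - 1 := Finset.card_erase_of_mem hxmem
            _ ≤ n := by omega
        have hτN : τ ∈ N := ih τ hτfin hτcard
        have : σ = Equiv.swap x (σ x) * τ := by
          rw [hτ_def, ← mul_assoc, Equiv.swap_mul_self, one_mul]
        rw [this]
        exact N.mul_mem (hswapN x (σ x)) hτN
  intro σ hσ
  exact main (hσ.toFinset.card) σ hσ le_rfl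
end

section
/- A finite group G has the property that every von Neumann subalgebra of L(G) invariant under the conjugation action of G is of the form L(H) for a normal subgroup H ⊴ G, if and only if G is trivial or G ≅ ℤ/2ℤ. -/
/-- The adjoint (star) operation on the group algebra `ℂ[G]`:
`star (∑ c_g g) = ∑ conj(c_g) g⁻¹`. -/
noncomputable def gaStar {G : Type*} [Group G] (x : MonoidAlgebra ℂ G) : MonoidAlgebra ℂ G :=
  x.coeff.sum fun g c => MonoidAlgebra.single g⁻¹ ((starRingEnd ℂ) c)

section Aux

open MonoidAlgebra Finset

variable {G : Type*} [Group G] [Fintype G]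

omit [Fintype G] in
lemma image_of_eq (s : Set G) :
    (fun h : G => MonoidAlgebra.of ℂ G h) '' s = (fun i => MonoidAlgebra.single i (1:ℂ)) '' s := by
  simp [MonoidAlgebra.of_apply]

omit [Fintype G] in
lemma span_of_top :
    Submodule.span ℂ ((fun h : G => MonoidAlgebra.of ℂ G h) '' ((⊤ : Subgroup G) : Set G)) = ⊤ := by
  rw [eq_top_iff]
  intro f _
  refine Submodule.span_mono ?_ (MonoidAlgebra.mem_span_support f)
  intro x hx
  rcases hx with ⟨g, _, rfl⟩
  exact ⟨g, trivial, rfl⟩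

omit [Fintype G] in
lemma supp_of_mem_span {H : Subgroup G} {x : MonoidAlgebra ℂ G}
    (hx : x ∈ Submodule.span ℂ ((fun h : G => MonoidAlgebra.of ℂ G h) '' (H : Set G)))
    {g : G} (hg : g ∉ H) : x.coeff g = 0 := by
  induction hx using Submodule.span_induction with
  | mem y hy =>
    obtain ⟨h, hh, rfl⟩ := hy
    show (MonoidAlgebra.of ℂ G h).coeff g = 0
    rw [MonoidAlgebra.of_apply, MonoidAlgebra.coeff_single, Finsupp.single_eq_of_ne']
    rintro rfl; exact hg hh
  | zero => rfl
  | add a b _ _ ha hb => rw [MonoidAlgebra.coeff_add, Finsupp.add_apply, ha, hb, add_zero]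
  | smul c a _ ha => rw [MonoidAlgebra.coeff_smul, Finsupp.smul_apply, ha, smul_zero]

noncomputable def sG (G : Type*) [Group G] [Fintype G] : MonoidAlgebra ℂ G :=
  ∑ g : G, MonoidAlgebra.of ℂ G g

omit [Fintype G] in
lemma gaStar_add (x y : MonoidAlgebra ℂ G) : gaStar (x + y) = gaStar x + gaStar y := by
  classical
  unfold gaStar
  rw [MonoidAlgebra.coeff_add, Finsupp.sum_add_index]
  · intro g _; simp
  · intro g _ c d; simp [Finsupp.single_add]

omit [Fintype G] in
lemma gaStar_single (g : G) (c : ℂ) :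
    gaStar (MonoidAlgebra.single g c) = MonoidAlgebra.single g⁻¹ ((starRingEnd ℂ) c) := by
  unfold gaStar
  rw [MonoidAlgebra.coeff_single, Finsupp.sum_single_index]
  simp

omit [Fintype G] in
lemma gaStar_one : gaStar (1 : MonoidAlgebra ℂ G) = 1 := by
  rw [MonoidAlgebra.one_def, gaStar_single]
  simp [MonoidAlgebra.one_def]

omit [Fintype G] in
lemma gaStar_smul (c : ℂ) (x : MonoidAlgebra ℂ G) :
    gaStar (c • x) = (starRingEnd ℂ) c • gaStar x := by
  unfold gaStar
  rw [MonoidAlgebra.coeff_smul, Finsupp.sum_smul_index' (fun g => by simp), Finsupp.smul_sum]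
  refine Finsupp.sum_congr fun g hg => ?_
  simp [Finsupp.smul_single, smul_eq_mul, map_mul]

lemma sG_mul_sG : sG G * sG G = (Fintype.card G : ℂ) • sG G := by
  unfold sG
  rw [Finset.sum_mul_sum]
  have : ∀ g : G, ∑ h : G, MonoidAlgebra.of ℂ G g * MonoidAlgebra.of ℂ G h = sG G := by
    intro g
    have : ∀ h : G, MonoidAlgebra.of ℂ G g * MonoidAlgebra.of ℂ G h
        = MonoidAlgebra.of ℂ G (g * h) := fun h => (map_mul _ _ _).symm
    rw [Finset.sum_congr rfl fun h _ => this h]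
    unfold sG
    exact Fintype.sum_equiv (Equiv.mulLeft g) _ _ (fun h => rfl)
  rw [Finset.sum_congr rfl fun g _ => this g, Finset.sum_const, card_univ]
  exact (Nat.cast_smul_eq_nsmul ℂ _ _).symm

lemma gaStar_sG : gaStar (sG G) = sG G := by
  have h1 : gaStar (sG G) = ∑ g : G, gaStar (MonoidAlgebra.of ℂ G g) :=
    map_sum (AddMonoidHom.mk' gaStar gaStar_add) _ _
  rw [h1]
  have h2 : ∀ g : G, gaStar (MonoidAlgebra.of ℂ G g) = MonoidAlgebra.of ℂ G g⁻¹ := by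
    intro g
    rw [MonoidAlgebra.of_apply, gaStar_single]
    simp [MonoidAlgebra.of_apply]
  rw [Finset.sum_congr rfl fun g _ => h2 g]
  exact Fintype.sum_equiv (Equiv.inv G) _ _ (fun h => rfl)

lemma conj_sG (g : G) : MonoidAlgebra.of ℂ G g * sG G * MonoidAlgebra.of ℂ G g⁻¹ = sG G := by
  unfold sG
  rw [Finset.mul_sum, Finset.sum_mul]
  have : ∀ h : G, MonoidAlgebra.of ℂ G g * MonoidAlgebra.of ℂ G h * MonoidAlgebra.of ℂ G g⁻¹
      = MonoidAlgebra.of ℂ G (g * h * g⁻¹) := by intro h; rw [← map_mul, ← map_mul]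
  rw [Finset.sum_congr rfl fun h _ => this h]
  exact Fintype.sum_equiv ((MulAut.conj g).toEquiv) _ _ (fun h => rfl)

lemma Pbad_mul : ∀ x y : MonoidAlgebra ℂ G, x ∈ Submodule.span ℂ {1, sG G} →
      y ∈ Submodule.span ℂ {1, sG G} → x * y ∈ Submodule.span ℂ {1, sG G} := by
  intro x y hx hy
  rw [Submodule.mem_span_pair] at hx hy ⊢
  obtain ⟨a, b, rfl⟩ := hx
  obtain ⟨c, d, rfl⟩ := hy
  refine ⟨a * c, a * d + b * c + b * d * (Fintype.card G : ℂ), ?_⟩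
  rw [add_mul, mul_add, mul_add, smul_mul_smul, smul_mul_smul, smul_mul_smul, smul_mul_smul]
  simp only [one_mul, mul_one]
  rw [sG_mul_sG, smul_smul, add_smul, add_smul, mul_assoc]
  abel

noncomputable def Pbad (G : Type*) [Group G] [Fintype G] : Subalgebra ℂ (MonoidAlgebra ℂ G) :=
  (Submodule.span ℂ {1, sG G}).toSubalgebra
    (Submodule.subset_span (Set.mem_insert _ _)) Pbad_mul

lemma mem_Pbad {x : MonoidAlgebra ℂ G} : x ∈ Pbad G ↔ x ∈ Submodule.span ℂ {1, sG G} :=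
  Iff.rfl

lemma sG_apply (g : G) : (sG G).coeff g = 1 := by
  classical
  unfold sG
  rw [MonoidAlgebra.coeff_sum, Finsupp.finset_sum_apply]
  have : ∀ h : G, (MonoidAlgebra.of ℂ G h).coeff g = if h = g then (1:ℂ) else 0 := by
    intro h
    rw [MonoidAlgebra.of_apply]
    exact Finsupp.single_apply
  rw [Finset.sum_congr rfl fun h _ => this h, Finset.sum_ite_eq' Finset.univ g fun _ => (1:ℂ)]
  simp

omit [Fintype G] in
lemma one_apply_ne {g : G} (hg : g ≠ 1) : (1 : MonoidAlgebra ℂ G).coeff g = 0 := by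
  rw [MonoidAlgebra.one_def]
  exact Finsupp.single_eq_of_ne' (Ne.symm hg)

lemma coeff_ne (a b : ℂ) {g : G} (hg : g ≠ 1) :
    (a • (1 : MonoidAlgebra ℂ G) + b • sG G).coeff g = b := by
  rw [MonoidAlgebra.coeff_add, MonoidAlgebra.coeff_smul, MonoidAlgebra.coeff_smul,
    Finsupp.add_apply, Finsupp.smul_apply, Finsupp.smul_apply, one_apply_ne hg, sG_apply,
    smul_eq_mul, smul_eq_mul, mul_zero, mul_one, zero_add]

lemma card_le_two_of_ISR
    (hISR : ∀ P : Subalgebra ℂ (MonoidAlgebra ℂ G),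
      (∀ x ∈ P, gaStar x ∈ P) →
      (∀ g : G, ∀ x ∈ P,
        MonoidAlgebra.of ℂ G g * x * MonoidAlgebra.of ℂ G g⁻¹ ∈ P) →
      ∃ H : Subgroup G, H.Normal ∧
        (P : Set (MonoidAlgebra ℂ G)) =
          ↑(Submodule.span ℂ ((fun h : G => MonoidAlgebra.of ℂ G h) '' (H : Set G)))) :
    Fintype.card G ≤ 2 := by
  classical
  by_contra hcard
  push_neg at hcard
  have hstar : ∀ x ∈ Pbad G, gaStar x ∈ Pbad G := by
    intro x hx
    rw [mem_Pbad, Submodule.mem_span_pair] at hx ⊢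
    obtain ⟨a, b, rfl⟩ := hx
    refine ⟨(starRingEnd ℂ) a, (starRingEnd ℂ) b, ?_⟩
    rw [gaStar_add, gaStar_smul, gaStar_smul, gaStar_one, gaStar_sG]
  have hconj : ∀ g : G, ∀ x ∈ Pbad G,
      MonoidAlgebra.of ℂ G g * x * MonoidAlgebra.of ℂ G g⁻¹ ∈ Pbad G := by
    intro g x hx
    rw [mem_Pbad, Submodule.mem_span_pair] at hx ⊢
    obtain ⟨a, b, rfl⟩ := hx
    refine ⟨a, b, ?_⟩
    rw [mul_add, add_mul, mul_smul_comm, mul_smul_comm, smul_mul_assoc, smul_mul_assoc,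
      mul_one, ← map_mul, mul_inv_cancel, map_one, conj_sG]
  obtain ⟨H, -, hset⟩ := hISR (Pbad G) hstar hconj
  have hsP : sG G ∈ (Pbad G : Set (MonoidAlgebra ℂ G)) :=
    Submodule.subset_span (Set.mem_insert_of_mem _ rfl)
  rw [hset] at hsP
  have hsH : sG G ∈ Submodule.span ℂ ((fun h : G => MonoidAlgebra.of ℂ G h) '' (H : Set G)) :=
    hsP
  have hHtop : H = ⊤ := by
    rw [eq_top_iff]
    intro g _
    by_contra hg
    have := supp_of_mem_span hsH hg
    rw [sG_apply] at this
    exact one_ne_zero this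
  subst hHtop
  rw [span_of_top] at hset
  -- find two distinct non-identity elements
  have hnt : Nontrivial G := Fintype.one_lt_card_iff_nontrivial.mp (by omega)
  obtain ⟨g₀, hg₀⟩ := exists_ne (1 : G)
  have hex : ∃ g₁ : G, g₁ ∉ ({1, g₀} : Finset G) := by
    by_contra hAll
    push_neg at hAll
    have hsub : (Finset.univ : Finset G) ⊆ {1, g₀} := fun g _ => hAll g
    have := Finset.card_le_card hsub
    rw [Finset.card_univ] at this
    have h2 : ({1, g₀} : Finset G).card ≤ 2 := Finset.card_insert_le _ _ |>.trans (by simp)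
    omega
  obtain ⟨g₁, hg₁⟩ := hex
  simp only [Finset.mem_insert, Finset.mem_singleton, not_or] at hg₁
  obtain ⟨hg₁1, hg₁g₀⟩ := hg₁
  have hmem : MonoidAlgebra.single g₀ (1:ℂ) ∈ (Pbad G : Set (MonoidAlgebra ℂ G)) := by
    rw [hset]
    exact Submodule.mem_top
  rw [SetLike.mem_coe, mem_Pbad, Submodule.mem_span_pair] at hmem
  obtain ⟨a, b, heq⟩ := hmem
  have e0 : b = 1 := by
    have := congrArg (fun x : MonoidAlgebra ℂ G => x.coeff g₀) heq
    simp only [coeff_ne a b hg₀] at this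
    simpa [coeff_ne a b hg₀, Finsupp.single_eq_same] using this
  have e1 : b = 0 := by
    have := congrArg (fun x : MonoidAlgebra ℂ G => x.coeff g₁) heq
    simp only [coeff_ne a b hg₁1] at this
    simpa [coeff_ne a b hg₁1, Finsupp.single_eq_of_ne' (fun h => hg₁g₀ h.symm)] using this
  rw [e0] at e1
  exact one_ne_zero e1

omit [Fintype G] in
lemma himg_bot : ((fun h : G => MonoidAlgebra.of ℂ G h) '' ((⊥ : Subgroup G) : Set G))
    = {(1 : MonoidAlgebra ℂ G)} := by
  rw [Subgroup.coe_bot, Set.image_singleton, map_one]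

omit [Fintype G] in
lemma decomp_one [Subsingleton G] (x : MonoidAlgebra ℂ G) :
    x.coeff 1 • (1 : MonoidAlgebra ℂ G) = x := by
  ext g
  have hg : g = 1 := Subsingleton.elim _ _
  subst hg
  rw [MonoidAlgebra.coeff_smul, Finsupp.smul_apply, MonoidAlgebra.one_def,
    MonoidAlgebra.coeff_single, Finsupp.single_eq_same, smul_eq_mul, mul_one]

omit [Fintype G] in
lemma decomp_two {t : G} (ht : t ≠ 1) (hall : ∀ g : G, g = 1 ∨ g = t)
    (x : MonoidAlgebra ℂ G) :
    x = x.coeff 1 • (1 : MonoidAlgebra ℂ G) + x.coeff t • MonoidAlgebra.of ℂ G t := by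
  ext g
  rw [MonoidAlgebra.coeff_add, MonoidAlgebra.coeff_smul, MonoidAlgebra.coeff_smul,
    Finsupp.add_apply, Finsupp.smul_apply, Finsupp.smul_apply, smul_eq_mul, smul_eq_mul,
    MonoidAlgebra.one_def, MonoidAlgebra.of_apply, MonoidAlgebra.coeff_single,
    MonoidAlgebra.coeff_single]
  rcases hall g with rfl | rfl
  · rw [Finsupp.single_eq_same, Finsupp.single_eq_of_ne' ht, mul_one, mul_zero, add_zero]
  · rw [Finsupp.single_eq_of_ne' (Ne.symm ht), Finsupp.single_eq_same, mul_one, mul_zero,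
      zero_add]

end Aux

/-- A finite group `G` has the ISR property (every star-subalgebra of `L(G) = ℂ[G]`
invariant under the conjugation action of `G` is of the form `L(H)`, the linear
span of a normal subgroup `H ⊴ G`) if and only if `G` is trivial or `G ≅ ℤ/2ℤ`. -/
theorem finite_ISR_iff (G : Type*) [Group G] [Fintype G] :
    (∀ P : Subalgebra ℂ (MonoidAlgebra ℂ G),
      (∀ x ∈ P, gaStar x ∈ P) →
      (∀ g : G, ∀ x ∈ P,
        MonoidAlgebra.of ℂ G g * x * MonoidAlgebra.of ℂ G g⁻¹ ∈ P) →
      ∃ H : Subgroup G, H.Normal ∧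
        (P : Set (MonoidAlgebra ℂ G)) =
          ↑(Submodule.span ℂ ((fun h : G => MonoidAlgebra.of ℂ G h) '' (H : Set G)))) ↔
    (Fintype.card G = 1 ∨ Nonempty (G ≃* Multiplicative (ZMod 2))) := by
  classical
  constructor
  · intro hISR
    have hle := card_le_two_of_ISR hISR
    have hpos : 0 < Fintype.card G := Fintype.card_pos
    have h12 : Fintype.card G = 1 ∨ Fintype.card G = 2 := by omega
    rcases h12 with h1 | h2
    · exact Or.inl h1
    · right
      have : Fact (Nat.Prime 2) := ⟨Nat.prime_two⟩
      refine ⟨mulEquivOfPrimeCardEq (p := 2) ?_ ?_⟩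
      · rw [Nat.card_eq_fintype_card, h2]
      · rw [Nat.card_eq_fintype_card]
        simp
  · intro h P hstar hconj
    rcases h with h1 | he
    · -- trivial group
      have hsub : Subsingleton G := Fintype.card_le_one_iff_subsingleton.mp h1.le
      refine ⟨⊥, inferInstance, ?_⟩
      ext x
      simp only [SetLike.mem_coe]
      rw [himg_bot, Submodule.mem_span_singleton]
      constructor
      · intro _
        exact ⟨x.coeff 1, decomp_one x⟩
      · rintro ⟨a, rfl⟩
        exact P.smul_mem P.one_mem a
    · -- group of order 2
      obtain ⟨e⟩ := he
      have h2 : Fintype.card G = 2 := by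
        rw [Fintype.card_congr e.toEquiv]
        rfl
      have hnt : Nontrivial G := Fintype.one_lt_card_iff_nontrivial.mp (by omega)
      obtain ⟨t, ht⟩ := exists_ne (1 : G)
      have hall : ∀ g : G, g = 1 ∨ g = t := by
        intro g
        by_contra hg
        push_neg at hg
        obtain ⟨hg1, hgt⟩ := hg
        have hsub : ({1, t, g} : Finset G) ⊆ Finset.univ := Finset.subset_univ _
        have hle := Finset.card_le_card hsub
        rw [Finset.card_univ, h2] at hle
        have hc3 : ({1, t, g} : Finset G).card = 3 := by
          rw [Finset.card_insert_of_notMem (by simp [Ne.symm ht, Ne.symm hg1]),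
            Finset.card_insert_of_notMem
              (by simp only [Finset.mem_singleton]; exact fun h => hgt h.symm),
            Finset.card_singleton]
        omega
      by_cases hC : ∀ x ∈ P, (x : MonoidAlgebra ℂ G).coeff t = 0
      · refine ⟨⊥, inferInstance, ?_⟩
        ext x
        simp only [SetLike.mem_coe]
        rw [himg_bot, Submodule.mem_span_singleton]
        constructor
        · intro hx
          refine ⟨x.coeff 1, ?_⟩
          have := decomp_two ht hall x
          rw [hC x hx, zero_smul, add_zero] at this
          exact this.symm
        · rintro ⟨a, rfl⟩
          exact P.smul_mem P.one_mem a
      · push_neg at hC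
        obtain ⟨x, hxP, hxt⟩ := hC
        have hsmul : x.coeff t • MonoidAlgebra.of ℂ G t ∈ P := by
          have hd := decomp_two ht hall x
          have h5 : x - x.coeff 1 • (1 : MonoidAlgebra ℂ G) = x.coeff t • MonoidAlgebra.of ℂ G t := by
            nth_rewrite 1 [hd]
            abel
          rw [← h5]
          exact sub_mem hxP (P.smul_mem P.one_mem _)
        have hofT : MonoidAlgebra.of ℂ G t ∈ P := by
          have : MonoidAlgebra.of ℂ G t = (x.coeff t)⁻¹ • (x.coeff t • MonoidAlgebra.of ℂ G t) := by
            rw [smul_smul, inv_mul_cancel₀ hxt, one_smul]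
          rw [this]
          exact P.smul_mem hsmul _
        refine ⟨⊤, inferInstance, ?_⟩
        ext y
        simp only [SetLike.mem_coe]
        rw [span_of_top]
        constructor
        · intro _
          exact Submodule.mem_top
        · intro _
          rw [decomp_two ht hall y]
          exact add_mem (P.smul_mem P.one_mem _) (P.smul_mem hofT _)
end
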